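/- arXiv:2410.05031 — 4 statements merged into one kernel-verified Lean document; each statement's English description precedes it below -/
import Mathlib

section
/- For all integers n ≥ 2 and all real x, the Baxter polynomials satisfy (6n³+28n²+37n+12)·ℬ_n(x) = (n+3)(n+4)·ℬ_{n+1}'(x) + ((8n²+23n+12)x − (n+3)(n+4))·ℬ_n'(x) − 3(n+2)x(x+1)·ℬ_n''(x). -/
open Finset

noncomputable def D (n k : ℕ) : ℝ :=
  if k = 0 then 0 else
    2 / (n * (n + 1) ^ 2) * (Nat.choose (n + 1) (k - 1)) *
      (Nat.choose (n + 1) k) * (Nat.choose (n + 1) (k + 1))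

noncomputable def Bpoly (n : ℕ) (x : ℝ) : ℝ := ∑ k ∈ range (n + 1), D n k * x ^ k

lemma core (N K a b c d : ℝ) (hN : 2 ≤ N) (hK1 : 1 ≤ K) (hKN : K ≤ N)
    (R1 : c * (K+1) = b * (N+1-K))
    (R2 : b * K = a * (N+2-K))
    (R3 : d * (K+2) = c * (N-K)) :
    (6*N^3+28*N^2+37*N+12) * (2/(N*(N+1)^2)*a*b*c)
      = (N+3)*(N+4)*((K+1)*(2/((N+1)*(N+2)^2)*(a+b)*(b+c)*(c+d)))
        + (8*N^2+23*N+12)*(K*(2/(N*(N+1)^2)*a*b*c))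
        - (N+3)*(N+4)*((K+1)*(2/(N*(N+1)^2)*b*c*d))
        - 3*(N+2)*(K*(K-1)*(2/(N*(N+1)^2)*a*b*c))
        - 3*(N+2)*((K+1)*K*(2/(N*(N+1)^2)*b*c*d)) := by
  have h1 : K+1 ≠ 0 := by positivity
  have h2 : N+2-K ≠ 0 := by nlinarith
  have h3 : K+2 ≠ 0 := by positivity
  have hN0 : N ≠ 0 := by nlinarith
  have hN1 : N+1 ≠ 0 := by nlinarith
  have hN2 : N+2 ≠ 0 := by nlinarith
  have ha : a = b * K / (N+2-K) := by rw [eq_div_iff h2]; linear_combination -R2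
  have hc : c = b * (N+1-K) / (K+1) := by rw [eq_div_iff h1]; linear_combination R1
  have hd : d = c * (N-K) / (K+2) := by rw [eq_div_iff h3]; linear_combination R3
  rw [hd, hc, ha]
  field_simp
  ring

lemma Dzero (m k : ℕ) (h : m < k) : D m k = 0 := by
  have : Nat.choose (m+1) (k+1) = 0 := Nat.choose_eq_zero_of_lt (by omega)
  simp [D, this]

lemma Dsucc (m j : ℕ) : D m (j+1)
    = 2 / (m * (m + 1) ^ 2) * (Nat.choose (m + 1) j) *
      (Nat.choose (m + 1) (j+1)) * (Nat.choose (m + 1) (j + 2)) := by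
  simp [D]

lemma Done (m : ℕ) (h : 1 ≤ m) : D m 1 = 1 := by
  have hm : (m:ℝ) ≠ 0 := Nat.cast_ne_zero.mpr (by omega)
  rw [Dsucc m 0]
  rw [Nat.choose_zero_right, Nat.choose_one_right]
  rw [show ((Nat.choose (m+1) 2 : ℕ) : ℝ) = (m+1) * m / 2 by
    rw [Nat.cast_choose_two]; push_cast; ring]
  have : ((m:ℝ)+1) ≠ 0 := by positivity
  field_simp
  push_cast
  ring

lemma key (n k : ℕ) (hn : 2 ≤ n) :
    (6*(n:ℝ)^3+28*(n:ℝ)^2+37*(n:ℝ)+12) * D n k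
      = ((n:ℝ)+3)*((n:ℝ)+4)*(((k:ℝ)+1) * D (n+1) (k+1))
        + (8*(n:ℝ)^2+23*(n:ℝ)+12)*((k:ℝ) * D n k)
        - ((n:ℝ)+3)*((n:ℝ)+4)*(((k:ℝ)+1) * D n (k+1))
        - 3*((n:ℝ)+2)*((k:ℝ)*((k:ℝ)-1) * D n k)
        - 3*((n:ℝ)+2)*(((k:ℝ)+1)*(k:ℝ) * D n (k+1)) := by
  rcases Nat.eq_zero_or_pos k with hk | hk
  · subst hk
    rw [show D n 0 = 0 by simp [D], Done n (by omega), Done (n+1) (by omega)]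
    push_cast
    ring
  rcases le_or_gt k n with hkn | hkn
  · -- main case 1 <= k <= n
    obtain ⟨j, rfl⟩ : ∃ j, k = j+1 := ⟨k-1, by omega⟩
    have hj : j + 1 ≤ n := hkn
    have R1 : ((Nat.choose (n+1) (j+2) : ℕ):ℝ) * (((j:ℝ)+1)+1)
        = ((Nat.choose (n+1) (j+1) : ℕ):ℝ) * ((n:ℝ)+1-((j:ℝ)+1)) := by
      have h := Nat.choose_succ_right_eq (n+1) (j+1)
      rw [show n+1-(j+1) = n-j by omega] at h
      have h' := congrArg (Nat.cast : ℕ → ℝ) h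
      push_cast [Nat.cast_sub (show j ≤ n by omega)] at h'
      linear_combination h'
    have R2 : ((Nat.choose (n+1) (j+1) : ℕ):ℝ) * ((j:ℝ)+1)
        = ((Nat.choose (n+1) j : ℕ):ℝ) * ((n:ℝ)+2-((j:ℝ)+1)) := by
      have h := Nat.choose_succ_right_eq (n+1) j
      have h' := congrArg (Nat.cast : ℕ → ℝ) h
      push_cast [Nat.cast_sub (show j ≤ n+1 by omega)] at h'
      linear_combination h'
    have R3 : ((Nat.choose (n+1) (j+3) : ℕ):ℝ) * (((j:ℝ)+1)+2)
        = ((Nat.choose (n+1) (j+2) : ℕ):ℝ) * ((n:ℝ)-((j:ℝ)+1)) := by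
      have h := Nat.choose_succ_right_eq (n+1) (j+2)
      rw [show n+1-(j+2) = n-(j+1) by omega] at h
      have h' := congrArg (Nat.cast : ℕ → ℝ) h
      push_cast [Nat.cast_sub (show j+1 ≤ n by omega)] at h'
      linear_combination h'
    have hmain := core (n:ℝ) ((j:ℝ)+1) _ _ _ _ (by exact_mod_cast hn)
      (by have := Nat.cast_nonneg (α := ℝ) j; linarith)
      (by exact_mod_cast hj) R1 R2 R3
    have hP1 : ((Nat.choose (n+1+1) (j+1) : ℕ) : ℝ)
        = ((Nat.choose (n+1) j : ℕ):ℝ) + ((Nat.choose (n+1) (j+1) : ℕ):ℝ) := by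
      exact_mod_cast Nat.choose_succ_succ (n+1) j
    have hP2 : ((Nat.choose (n+1+1) (j+1+1) : ℕ) : ℝ)
        = ((Nat.choose (n+1) (j+1) : ℕ):ℝ) + ((Nat.choose (n+1) (j+2) : ℕ):ℝ) := by
      exact_mod_cast Nat.choose_succ_succ (n+1) (j+1)
    have hP3 : ((Nat.choose (n+1+1) (j+1+2) : ℕ) : ℝ)
        = ((Nat.choose (n+1) (j+2) : ℕ):ℝ) + ((Nat.choose (n+1) (j+3) : ℕ):ℝ) := by
      exact_mod_cast Nat.choose_succ_succ (n+1) (j+2)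
    simp only [Dsucc]
    rw [hP1, hP2, hP3]
    push_cast
    linear_combination hmain
  · -- k >= n+1
    rw [Dzero n k hkn, Dzero n (k+1) (by omega), Dzero (n+1) (k+1) (by omega)]
    ring

lemma hB (m : ℕ) (x : ℝ) :
    HasDerivAt (Bpoly m) (∑ k ∈ range (m+1), D m k * (k * x ^ (k-1))) x := by
  unfold Bpoly
  exact HasDerivAt.fun_sum fun k _ => (hasDerivAt_pow k x).const_mul _

lemma derivB (m : ℕ) : deriv (Bpoly m) = fun x => ∑ k ∈ range (m+1), D m k * (k * x ^ (k-1)) :=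
  funext fun x => (hB m x).deriv

lemma hB2 (m : ℕ) (x : ℝ) :
    HasDerivAt (deriv (Bpoly m))
      (∑ k ∈ range (m+1), D m k * (k * ((k-1 : ℕ) * x ^ (k-1-1)))) x := by
  rw [derivB]
  exact HasDerivAt.fun_sum fun k _ => ((hasDerivAt_pow (k-1) x).const_mul (k:ℝ)).const_mul _

lemma L0 (m : ℕ) (x : ℝ) :
    ∑ k ∈ range (m+1), D m k * x ^ k = ∑ k ∈ range (m+2), D m k * x ^ k := by
  rw [Finset.sum_range_succ _ (m+1), Dzero m (m+1) (by omega)]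
  ring

lemma L1 (m : ℕ) (x : ℝ) :
    ∑ k ∈ range (m+1), D m k * (k * x ^ (k-1))
      = ∑ k ∈ range (m+1), ((k:ℝ)+1) * D m (k+1) * x ^ k := by
  rw [Finset.sum_range_succ' _ m, Finset.sum_range_succ _ m, Dzero m (m+1) (by omega)]
  simp only [Nat.cast_zero, zero_mul, mul_zero, add_zero, Nat.add_sub_cancel]
  exact Finset.sum_congr rfl fun k _ => by push_cast; ring

lemma L2 (m : ℕ) (x : ℝ) :
    x * ∑ k ∈ range (m+1), D m k * (k * x ^ (k-1))
      = ∑ k ∈ range (m+2), (k:ℝ) * D m k * x ^ k := by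
  rw [Finset.mul_sum, Finset.sum_range_succ _ (m+1), Dzero m (m+1) (by omega)]
  rw [show ((m+1:ℕ):ℝ) * 0 * x ^ (m+1) = 0 by ring, add_zero]
  refine Finset.sum_congr rfl fun k _ => ?_
  cases k with
  | zero => simp
  | succ j => simp only [Nat.add_sub_cancel]; push_cast; ring

lemma L3 (m : ℕ) (x : ℝ) :
    x^2 * ∑ k ∈ range (m+1), D m k * (k * ((k-1:ℕ) * x ^ (k-1-1)))
      = ∑ k ∈ range (m+2), (k:ℝ) * ((k:ℝ)-1) * D m k * x ^ k := by
  rw [Finset.mul_sum, Finset.sum_range_succ _ (m+1), Dzero m (m+1) (by omega)]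
  rw [show ((m+1:ℕ):ℝ) * (((m+1:ℕ):ℝ)-1) * 0 * x ^ (m+1) = 0 by ring, add_zero]
  refine Finset.sum_congr rfl fun k _ => ?_
  match k with
  | 0 => simp
  | 1 => simp
  | (j+2) =>
    simp only [Nat.add_sub_cancel, show j+2-1 = j+1 from rfl, show j+1-1 = j from rfl]
    push_cast; ring

lemma L4 (m : ℕ) (x : ℝ) :
    x * ∑ k ∈ range (m+1), D m k * (k * ((k-1:ℕ) * x ^ (k-1-1)))
      = ∑ k ∈ range (m+2), ((k:ℝ)+1) * k * D m (k+1) * x ^ k := by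
  rw [Finset.mul_sum, Finset.sum_range_succ' _ m, Finset.sum_range_succ _ (m+1),
    Finset.sum_range_succ _ m, Dzero m (m+1) (by omega), Dzero m (m+2) (by omega)]
  simp only [Nat.cast_zero, zero_mul, mul_zero, add_zero]
  refine Finset.sum_congr rfl fun k _ => ?_
  cases k with
  | zero => simp
  | succ j =>
    simp only [Nat.add_sub_cancel]
    push_cast; ring

theorem baxter_diff_recurrence2 (n : ℕ) (hn : 2 ≤ n) (x : ℝ) :
    (6 * (n : ℝ) ^ 3 + 28 * (n : ℝ) ^ 2 + 37 * n + 12) * Bpoly n x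
      = ((n : ℝ) + 3) * ((n : ℝ) + 4) * deriv (Bpoly (n + 1)) x
        + ((8 * (n : ℝ) ^ 2 + 23 * n + 12) * x - ((n : ℝ) + 3) * ((n : ℝ) + 4)) * deriv (Bpoly n) x
        - 3 * ((n : ℝ) + 2) * x * (x + 1) * deriv (deriv (Bpoly n)) x := by
  have T3d : deriv (deriv (Bpoly n)) x
      = ∑ k ∈ range (n+1), D n k * (k * ((k-1:ℕ) * x ^ (k-1-1))) := (hB2 n x).deriv
  have T1d : deriv (Bpoly (n+1)) x = ∑ k ∈ range (n+1+1), D (n+1) k * (k * x ^ (k-1)) := by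
    rw [derivB]
  have T2d : deriv (Bpoly n) x = ∑ k ∈ range (n+1), D n k * (k * x ^ (k-1)) := by
    rw [derivB]
  rw [T3d, T1d, T2d]
  have E0 : Bpoly n x = ∑ k ∈ range (n+2), D n k * x ^ k := L0 n x
  have E1 : ∑ k ∈ range (n+1+1), D (n+1) k * (k * x ^ (k-1))
      = ∑ k ∈ range (n+1+1), ((k:ℝ)+1) * D (n+1) (k+1) * x ^ k := L1 (n+1) x
  have E2 : ∑ k ∈ range (n+1), D n k * (k * x ^ (k-1))
      = ∑ k ∈ range (n+2), ((k:ℝ)+1) * D n (k+1) * x ^ k := by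
    rw [L1 n x, Finset.sum_range_succ _ (n+1), Dzero n (n+2) (by omega)]
    push_cast
    ring
  have E2x := L2 n x
  have E3 := L3 n x
  have E4 := L4 n x
  have H : (6*(n:ℝ)^3+28*(n:ℝ)^2+37*(n:ℝ)+12) * ∑ k ∈ range (n+2), D n k * x ^ k
      = ((n:ℝ)+3)*((n:ℝ)+4) * ∑ k ∈ range (n+2), ((k:ℝ)+1) * D (n+1) (k+1) * x ^ k
        + (8*(n:ℝ)^2+23*(n:ℝ)+12) * ∑ k ∈ range (n+2), (k:ℝ) * D n k * x ^ k
        - ((n:ℝ)+3)*((n:ℝ)+4) * ∑ k ∈ range (n+2), ((k:ℝ)+1) * D n (k+1) * x ^ k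
        - 3*((n:ℝ)+2) * ∑ k ∈ range (n+2), (k:ℝ)*((k:ℝ)-1) * D n k * x ^ k
        - 3*((n:ℝ)+2) * ∑ k ∈ range (n+2), ((k:ℝ)+1)*(k:ℝ) * D n (k+1) * x ^ k := by
    rw [Finset.mul_sum, Finset.mul_sum, Finset.mul_sum, Finset.mul_sum, Finset.mul_sum,
      Finset.mul_sum, ← Finset.sum_add_distrib, ← Finset.sum_sub_distrib,
      ← Finset.sum_sub_distrib, ← Finset.sum_sub_distrib]
    exact Finset.sum_congr rfl fun k _ => by linear_combination (x^k) * key n k hn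
  linear_combination (6*(n:ℝ)^3+28*(n:ℝ)^2+37*(n:ℝ)+12) * E0
    - ((n:ℝ)+3)*((n:ℝ)+4) * E1
    - (8*(n:ℝ)^2+23*(n:ℝ)+12) * E2x
    + ((n:ℝ)+3)*((n:ℝ)+4) * E2
    + 3*((n:ℝ)+2) * E3 + 3*((n:ℝ)+2) * E4 + H
end

section
/- The mean μ_n = ℬ_n'(1)/ℬ_n(1) satisfies μ_n / n → 1/2 as n → ∞; that is, the average number of rises in a uniformly random reduced Baxter permutation of length n is asymptotically n/2. -/
open Finset

noncomputable def B (n : ℕ) : ℝ := if n = 0 then 1 else ∑ k ∈ Icc 1 n, D n k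

noncomputable def g (n : ℕ) : ℝ := ∑ k ∈ range (n + 1), (k : ℝ) * D n k

lemma D_nonneg (n k : ℕ) : 0 ≤ D n k := by
  unfold D; split
  · exact le_refl 0
  · positivity

lemma D_top (n : ℕ) : D n (n + 1) = 0 := by
  unfold D
  rw [if_neg (Nat.succ_ne_zero n),
    Nat.choose_eq_zero_of_lt (by omega : n + 1 < n + 1 + 1)]
  simp

lemma D_symm (n k : ℕ) (hk : k ≤ n + 1) : D n (n + 1 - k) = D n k := by
  rcases Nat.eq_zero_or_pos k with h0 | h0
  · subst h0; simp [D_top, D]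
  rcases eq_or_lt_of_le hk with h1 | h1
  · rw [h1]; simp [D_top, D]
  unfold D
  rw [if_neg (by omega), if_neg (by omega)]
  have e1 : n + 1 - k - 1 = n + 1 - (k + 1) := by omega
  have e2 : n + 1 - k + 1 = n + 1 - (k - 1) := by omega
  rw [e1, e2, Nat.choose_symm (by omega : k + 1 ≤ n + 1),
    Nat.choose_symm (by omega : k ≤ n + 1),
    Nat.choose_symm (by omega : k - 1 ≤ n + 1)]
  ring

lemma B_eq (n : ℕ) (hn : 1 ≤ n) : B n = ∑ k ∈ range (n + 2), D n k := by
  rw [B, if_neg (by omega)]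
  have h : Finset.Icc 1 n = (Finset.range (n + 2)).erase 0 \ {n + 1} := by
    ext x; simp; omega
  rw [h, Finset.sum_sdiff_eq_sub (by simp), Finset.sum_singleton, D_top, sub_zero,
    Finset.sum_erase _ (by simp [D])]

lemma g_eq (n : ℕ) : ∑ k ∈ range (n + 2), (k : ℝ) * D n k = g n := by
  rw [Finset.sum_range_succ, D_top, mul_zero, add_zero, g]

lemma key_s13 (n : ℕ) (hn : 1 ≤ n) : 2 * g n = (n + 1) * B n := by
  have hrefl : g n = ∑ k ∈ range (n + 2), ((n : ℝ) + 1 - k) * D n k := by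
    rw [← g_eq]
    rw [← Finset.sum_range_reflect (fun j => (j : ℝ) * D n j) (n + 2)]
    apply Finset.sum_congr rfl
    intro j hj
    simp only [Finset.mem_range] at hj
    have hj' : j ≤ n + 1 := by omega
    have : n + 2 - 1 - j = n + 1 - j := by omega
    rw [this, D_symm n j hj', Nat.cast_sub (by omega)]
    push_cast
    ring
  rw [two_mul]
  nth_rewrite 2 [hrefl]
  rw [← g_eq, B_eq n hn, Finset.mul_sum, ← Finset.sum_add_distrib]
  apply Finset.sum_congr rfl
  intro j _
  ring

lemma B_pos (n : ℕ) (hn : 1 ≤ n) : 0 < B n := by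
  rw [B, if_neg (by omega)]
  apply Finset.sum_pos' (fun k _ => D_nonneg n k)
  refine ⟨1, Finset.mem_Icc.mpr ⟨le_refl 1, hn⟩, ?_⟩
  unfold D
  rw [if_neg one_ne_zero]
  have h1 : (0:ℝ) < n := by exact_mod_cast hn
  have h2 : 0 < Nat.choose (n + 1) 2 := Nat.choose_pos (by omega)
  have h3 : 0 < Nat.choose (n + 1) 1 := Nat.choose_pos (by omega)
  have h4 : 0 < Nat.choose (n + 1) 0 := Nat.choose_pos (by omega)
  positivity

theorem baxter_mean_asymptotic :
    Filter.Tendsto (fun n : ℕ => g n / B n / n) Filter.atTop (nhds (1 / 2)) := by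
  have h : Filter.Tendsto (fun n : ℕ => 1 / 2 + 1 / (n : ℝ) * (1 / 2))
      Filter.atTop (nhds (1 / 2)) := by
    have := tendsto_one_div_atTop_nhds_zero_nat.mul_const (1 / 2 : ℝ)
    simpa using (tendsto_const_nhds.add (by simpa using this) :
      Filter.Tendsto (fun n : ℕ => 1 / 2 + 1 / (n : ℝ) * (1 / 2)) Filter.atTop
        (nhds (1 / 2 + 0)))
  apply h.congr'
  filter_upwards [Filter.eventually_ge_atTop 1] with n hn
  have hB := B_pos n hn
  have hk := key_s13 n hn
  have hn' : (0:ℝ) < n := by exact_mod_cast hn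
  have hg : g n = ((n : ℝ) + 1) / 2 * B n := by linarith
  rw [hg]
  field_simp
end

section
/- The variance σ_n² = ℬ_n''(1)/ℬ_n(1) + μ_n − μ_n², where μ_n = ℬ_n'(1)/ℬ_n(1), satisfies σ_n²/n → 1/12 as n → ∞. In particular σ_n² → +∞. -/
open Finset

noncomputable def h (n : ℕ) : ℝ := ∑ k ∈ range (n + 1), (k : ℝ) * ((k : ℝ) - 1) * D n k

noncomputable def mu (n : ℕ) : ℝ := g n / B n

noncomputable def sigmaSq (n : ℕ) : ℝ := h n / B n + mu n - (mu n) ^ 2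

noncomputable def pp (n k : ℕ) : ℝ :=
  ((n+1).choose (k-1) : ℝ) * ((n+1).choose k : ℝ) * ((n+1).choose (k+1) : ℝ)

noncomputable def T (n : ℕ) : ℝ := ∑ k ∈ Icc 1 n, pp n k

lemma choose_mul_real (a j : ℕ) :
    ((a.choose (j+1) : ℝ)) * ((j:ℝ)+1) = (a.choose j : ℝ) * ((a:ℝ) - j) := by
  rcases le_or_gt j a with hja | hja
  · have h2 := congrArg (Nat.cast (R := ℝ)) (Nat.choose_succ_right_eq a j)
    push_cast [Nat.cast_sub hja] at h2
    linarith
  · rw [Nat.choose_eq_zero_of_lt hja, Nat.choose_eq_zero_of_lt (by omega)]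
    simp

lemma choose_top_real (a j : ℕ) :
    ((a.choose j : ℝ)) * ((a:ℝ)+1) = ((a+1).choose j : ℝ) * (((a:ℝ)+1) - j) := by
  rcases le_or_gt j a with hja | hja
  · have h2 := congrArg (Nat.cast (R := ℝ)) (Nat.choose_mul_succ_eq a j)
    push_cast [Nat.cast_sub (show j ≤ a + 1 by omega)] at h2
    linarith
  · rcases eq_or_lt_of_le (show a + 1 ≤ j by omega) with hje | hje
    · rw [Nat.choose_eq_zero_of_lt hja, ← hje, Nat.choose_self]
      push_cast
      ring
    · rw [Nat.choose_eq_zero_of_lt hja, Nat.choose_eq_zero_of_lt hje]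
      simp

lemma step_k (n j : ℕ) :
    ((j:ℝ)+1) * ((j:ℝ)+2) * ((j:ℝ)+3) * pp n (j+2)
      = (((n:ℝ)+1)-(j:ℝ)) * ((n:ℝ)-(j:ℝ)) * (((n:ℝ)-1)-(j:ℝ)) * pp n (j+1) := by
  have e1 := choose_mul_real (n+1) j
  have e2 := choose_mul_real (n+1) (j+1)
  have e3 := choose_mul_real (n+1) (j+2)
  push_cast at e1 e2 e3
  simp only [pp, Nat.add_sub_cancel]
  push_cast
  linear_combination (((j:ℝ)+2)*((j:ℝ)+3)*((n+1).choose (j+2) : ℝ)*((n+1).choose (j+3) : ℝ)) * e1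
    + ((((j:ℝ))+3)*(((n:ℝ)+1)-(j:ℝ))*((n+1).choose j : ℝ)*((n+1).choose (j+3) : ℝ)) * e2
    + ((((n:ℝ)+1)-(j:ℝ))*(((n:ℝ))-(j:ℝ))*((n+1).choose j : ℝ)*((n+1).choose (j+1) : ℝ)) * e3

lemma step_n (n j : ℕ) :
    (((n:ℝ)+2))^3 * pp n (j+1)
      = (((n:ℝ)+2)-(j:ℝ)) * (((n:ℝ)+1)-(j:ℝ)) * ((n:ℝ)-(j:ℝ)) * pp (n+1) (j+1) := by
  have e1 := choose_top_real (n+1) j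
  have e2 := choose_top_real (n+1) (j+1)
  have e3 := choose_top_real (n+1) (j+2)
  push_cast at e1 e2 e3
  simp only [pp, Nat.add_sub_cancel]
  push_cast
  linear_combination ((((n:ℝ)+2))^2*((n+1).choose (j+1) : ℝ)*((n+1).choose (j+2) : ℝ)) * e1
    + ((((n:ℝ)+2))*((((n:ℝ)+2))-(j:ℝ))*((n+2).choose j : ℝ)*((n+1).choose (j+2) : ℝ)) * e2
    + (((((n:ℝ)+2))-(j:ℝ))*((((n:ℝ)+1))-(j:ℝ))*((n+2).choose j : ℝ)*((n+2).choose (j+1) : ℝ)) * e3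

lemma pp_symm (n k : ℕ) (hk1 : 1 ≤ k) (hkn : k ≤ n) : pp n (n+1-k) = pp n k := by
  simp only [pp]
  have h1 : n + 1 - k - 1 = (n+1) - (k+1) := by omega
  have h2 : n + 1 - k + 1 = (n+1) - (k-1) := by omega
  rw [h1, h2, Nat.choose_symm (by omega), Nat.choose_symm (by omega),
    Nat.choose_symm (by omega)]
  ring

lemma sum_reflect (n : ℕ) (f : ℕ → ℝ) :
    ∑ k ∈ Icc 1 n, f k = ∑ k ∈ Icc 1 n, f (n+1-k) := by
  apply Finset.sum_nbij' (fun k => n+1-k) (fun k => n+1-k)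
  all_goals intro a ha <;> simp only [mem_Icc] at * <;> first | omega | (congr 1; omega)

lemma T_pos (n : ℕ) (hn : 1 ≤ n) : 0 < T n := by
  have h1 : (1:ℕ) ∈ Icc 1 n := by simp [mem_Icc]; omega
  apply Finset.sum_pos' (fun k _ => by simp only [pp]; positivity)
  refine ⟨1, h1, ?_⟩
  simp only [pp]
  have c0 : (0:ℝ) < ((n+1).choose (1-1) : ℝ) := by
    exact_mod_cast Nat.choose_pos (by omega)
  have c1 : (0:ℝ) < ((n+1).choose 1 : ℝ) := by
    exact_mod_cast Nat.choose_pos (by omega)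
  have c2 : (0:ℝ) < ((n+1).choose (1+1) : ℝ) := by
    exact_mod_cast Nat.choose_pos (by omega)
  exact mul_pos (mul_pos c0 c1) c2

lemma sum_k_pp (n : ℕ) : ∑ k ∈ Icc 1 n, (k:ℝ) * pp n k = (((n:ℝ)+1)/2) * T n := by
  have H := sum_reflect n (fun k => (k:ℝ) * pp n k)
  have H2 : ∑ k ∈ Icc 1 n, ((n+1-k : ℕ):ℝ) * pp n (n+1-k)
      = ∑ k ∈ Icc 1 n, ((((n:ℝ)+1) - k) * pp n k) := by
    apply Finset.sum_congr rfl
    intro k hk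
    simp only [mem_Icc] at hk
    rw [pp_symm n k hk.1 hk.2, Nat.cast_sub (by omega)]
    push_cast
    ring
  rw [H2] at H
  have H3 : ∑ k ∈ Icc 1 n, ((((n:ℝ)+1) - k) * pp n k)
      = ((n:ℝ)+1) * T n - ∑ k ∈ Icc 1 n, (k:ℝ) * pp n k := by
    rw [T, Finset.mul_sum, ← Finset.sum_sub_distrib]
    apply Finset.sum_congr rfl
    intro k _
    ring
  rw [H3] at H
  linarith

lemma pp_top_zero (n : ℕ) : pp n (n+1) = 0 := by
  simp [pp, Nat.choose_eq_zero_of_lt]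

lemma sum_rho (n : ℕ) :
    ∑ k ∈ Icc 1 (n+1), (((n:ℝ)+3)-(k:ℝ)) * (((n:ℝ)+2)-(k:ℝ)) * (((n:ℝ)+1)-(k:ℝ)) * pp (n+1) k
      = ((n:ℝ)+2)^3 * T n := by
  have H : ∀ k ∈ Icc 1 (n+1),
      (((n:ℝ)+3)-(k:ℝ)) * (((n:ℝ)+2)-(k:ℝ)) * (((n:ℝ)+1)-(k:ℝ)) * pp (n+1) k
        = ((n:ℝ)+2)^3 * pp n k := by
    intro k hk
    simp only [mem_Icc] at hk
    obtain ⟨j, rfl⟩ : ∃ j, k = j + 1 := ⟨k - 1, by omega⟩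
    have := step_n n j
    push_cast
    push_cast at this
    linarith
  rw [Finset.sum_congr rfl H, ← Finset.mul_sum, Finset.sum_Icc_succ_top (by omega),
    pp_top_zero, ← T]
  ring

lemma sum_kk_pp (n : ℕ) :
    ∑ k ∈ Icc 1 (n+1), (k:ℝ) * ((k:ℝ) - 1) * pp (n+1) k
      = ((n:ℝ)+1)*(n:ℝ)/6 * T (n+1) + 2/3 * ((n:ℝ)+2)^2 * T n := by
  set x : ℝ := (n:ℝ) with hx
  have hx2 : x + 2 ≠ 0 := by positivity
  set W : ℕ → ℝ := fun k =>
    (k:ℝ) * ((k:ℝ) - 1) - (x+1)*x/6 - 2/(3*(x+2)) * ((x+3)-(k:ℝ))*((x+2)-(k:ℝ))*((x+1)-(k:ℝ))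
    with hW
  have HW : ∑ k ∈ Icc 1 (n+1), W k * pp (n+1) k = 0 := by
    have H := sum_reflect (n+1) (fun k => W k * pp (n+1) k)
    have H2 : ∑ k ∈ Icc 1 (n+1), W ((n+1)+1-k) * pp (n+1) ((n+1)+1-k)
        = ∑ k ∈ Icc 1 (n+1), -(W k * pp (n+1) k) := by
      apply Finset.sum_congr rfl
      intro k hk
      simp only [mem_Icc] at hk
      rw [pp_symm (n+1) k hk.1 hk.2]
      have hcast : (((n+1)+1-k : ℕ):ℝ) = x + 2 - (k:ℝ) := by
        rw [Nat.cast_sub (by omega)]; push_cast; ring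
      simp only [hW, hcast]
      field_simp
      ring
    rw [H2, Finset.sum_neg_distrib] at H
    linarith
  have expand : ∑ k ∈ Icc 1 (n+1), W k * pp (n+1) k
      = (∑ k ∈ Icc 1 (n+1), (k:ℝ) * ((k:ℝ) - 1) * pp (n+1) k)
        - (x+1)*x/6 * T (n+1)
        - 2/(3*(x+2)) * (((n:ℝ)+2)^3 * T n) := by
    rw [← sum_rho n, T, Finset.mul_sum, Finset.mul_sum, ← Finset.sum_sub_distrib,
      ← Finset.sum_sub_distrib]
    apply Finset.sum_congr rfl
    intro k _
    simp only [hW]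
    ring
  rw [expand] at HW
  have : 2/(3*(x+2)) * ((x+2)^3 * T n) = 2/3 * (x+2)^2 * T n := by
    field_simp
  rw [this] at HW
  linarith

noncomputable def scert (x y : ℝ) : ℝ :=
  x^2*(x+1)^2*( y*(14*x+32*x^2+14*x^3) + y^2*(-8-39*x-27*x^2)
    + y^3*(12+4*x-32*x^2-14*x^3) + y^4*(4+39*x+27*x^2) + y^5*(-12-18*x) + 4*y^6 )

lemma pp_top_zero2 (n : ℕ) : pp n (n+2) = 0 := by
  have h0 : (n+1).choose (n+2) = 0 := Nat.choose_eq_zero_of_lt (by omega)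
  simp [pp, h0]

lemma telescope (f : ℕ → ℝ) (m : ℕ) :
    ∑ k ∈ Icc 1 m, (f (k+1) - f k) = f (m+1) - f 1 := by
  induction m with
  | zero => simp
  | succ m ih => rw [Finset.sum_Icc_succ_top (by omega), ih]; ring

lemma T_rec (n : ℕ) :
    (((n:ℝ)+2)*((n:ℝ)+1)*((n:ℝ)+4)*((n:ℝ)+5)) * T (n+2)
      = ((7*((n:ℝ)+2)^2+7*((n:ℝ)+2)-2)*((n:ℝ)+3)^2) * T (n+1)
        + (8*((n:ℝ)+2)^2*((n:ℝ)+3)^2) * T n := by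
  set x : ℝ := (n:ℝ) + 2 with hxdef
  have claim : ∀ k ∈ Icc 1 (n+2),
      ((x+1)^3*x^3*(x*(x-1)*(x+2)*(x+3))) * pp (n+2) k
        - ((x+1)^3*x^3*((7*x^2+7*x-2)*(x+1)^2)) * pp (n+1) k
        - ((x+1)^3*x^3*(8*x^2*(x+1)^2)) * pp n k
      = scert x ((k+1 : ℕ):ℝ) * pp (n+2) (k+1) - scert x ((k : ℕ):ℝ) * pp (n+2) k := by
    intro k hk
    simp only [mem_Icc] at hk
    obtain ⟨j, rfl⟩ : ∃ j, k = j + 1 := ⟨k - 1, by omega⟩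
    rw [show j + 1 + 1 = j + 2 from rfl]
    have e1 := step_k (n+2) j
    have e2 := step_n (n+1) j
    have e3 := step_n n j
    push_cast at e1 e2 e3 ⊢
    have hx : (n:ℝ) = x - 2 := by rw [hxdef]; ring
    rw [hx] at e1 e2 e3
    set J : ℝ := (j:ℝ)
    have hkkk : (J+1) * (J+2) * (J+3) ≠ 0 := by positivity
    apply mul_left_cancel₀ hkkk
    simp only [scert]
    linear_combination (-(x^2*(x+1)^2*((J+2)*(14*x+32*x^2+14*x^3) + (J+2)^2*(-8-39*x-27*x^2)
        + (J+2)^3*(12+4*x-32*x^2-14*x^3) + (J+2)^4*(4+39*x+27*x^2) + (J+2)^5*(-12-18*x)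
        + 4*(J+2)^6))) * e1
      + ((J+1)*(J+2)*(J+3)*(-(x^3*((7*x^2+7*x-2)*(x+1)^2))
          - (8*x^2*(x+1)^2)*((x-J)*(x-1-J)*(x-2-J)))) * e2
      + ((J+1)*(J+2)*(J+3)*(-((8*x^2*(x+1)^2)*(x+1)^3))) * e3
  have hsum := Finset.sum_congr rfl claim
  have htel := telescope (fun k : ℕ => scert x ((k : ℕ):ℝ) * pp (n+2) k) (n+2)
  rw [htel] at hsum
  have hz1 : scert x ((1:ℕ):ℝ) * pp (n+2) 1 = 0 := by
    have h0 : scert x ((1:ℕ):ℝ) = 0 := by simp only [scert]; push_cast; ring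
    rw [h0, zero_mul]
  have hz2 : scert x (((n+2)+1 : ℕ):ℝ) * pp (n+2) ((n+2)+1) = 0 := by
    rw [pp_top_zero (n+2), mul_zero]
  rw [hz1, hz2] at hsum
  have hsplit : ∑ k ∈ Icc 1 (n+2),
      (((x+1)^3*x^3*(x*(x-1)*(x+2)*(x+3))) * pp (n+2) k
        - ((x+1)^3*x^3*((7*x^2+7*x-2)*(x+1)^2)) * pp (n+1) k
        - ((x+1)^3*x^3*(8*x^2*(x+1)^2)) * pp n k)
      = ((x+1)^3*x^3) * ((x*(x-1)*(x+2)*(x+3)) * T (n+2)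
        - ((7*x^2+7*x-2)*(x+1)^2) * T (n+1)
        - (8*x^2*(x+1)^2) * T n) := by
    rw [Finset.sum_sub_distrib, Finset.sum_sub_distrib,
      ← Finset.mul_sum, ← Finset.mul_sum, ← Finset.mul_sum]
    have s2 : ∑ k ∈ Icc 1 (n+2), pp (n+1) k = T (n+1) := by
      rw [Finset.sum_Icc_succ_top (by omega : 1 ≤ n+2), pp_top_zero (n+1), ← T]; ring
    have s3 : ∑ k ∈ Icc 1 (n+2), pp n k = T n := by
      rw [Finset.sum_Icc_succ_top (by omega : 1 ≤ n+2),
        Finset.sum_Icc_succ_top (by omega : 1 ≤ n+1),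
        pp_top_zero n, pp_top_zero2 n, ← T]; ring
    rw [s2, s3, ← T]
    ring
  rw [hsplit] at hsum
  have hxx : ((x+1)^3*x^3) ≠ 0 := by
    have hxp : (0:ℝ) < x := by rw [hxdef]; positivity
    positivity
  have hz := (mul_eq_zero.mp (by linarith [hsum] :
      ((x+1)^3*x^3) * ((x*(x-1)*(x+2)*(x+3)) * T (n+2)
        - ((7*x^2+7*x-2)*(x+1)^2) * T (n+1)
        - (8*x^2*(x+1)^2) * T n) = 0)).resolve_left hxx
  have hA : (((n:ℝ)+2)*((n:ℝ)+1)*((n:ℝ)+4)*((n:ℝ)+5)) = x*(x-1)*(x+2)*(x+3) := by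
    rw [hxdef]; ring
  have hB : ((7*((n:ℝ)+2)^2+7*((n:ℝ)+2)-2)*((n:ℝ)+3)^2) = (7*x^2+7*x-2)*(x+1)^2 := by
    rw [hxdef]; ring
  have hC : (8*((n:ℝ)+2)^2*((n:ℝ)+3)^2) = 8*x^2*(x+1)^2 := by rw [hxdef]; ring
  rw [hA, hB, hC]
  linarith [hz]

lemma T_two : T 2 = 18 := by
  rw [T, Finset.sum_Icc_succ_top (by omega : 1 ≤ 2), Finset.Icc_self, Finset.sum_singleton]
  norm_num [pp, show (3:ℕ).choose 2 = 3 from rfl, show (3:ℕ).choose 3 = 1 from rfl]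

lemma T_three : T 3 = 144 := by
  rw [T, Finset.sum_Icc_succ_top (by omega : 1 ≤ 3), Finset.sum_Icc_succ_top (by omega : 1 ≤ 2),
    Finset.Icc_self, Finset.sum_singleton]
  norm_num [pp, show (4:ℕ).choose 2 = 6 from rfl, show (4:ℕ).choose 3 = 4 from rfl,
    show (4:ℕ).choose 4 = 1 from rfl, show (4:ℕ).choose 5 = 0 from rfl]

lemma inv_bounds (m : ℕ) :
    (((m:ℝ)+3)^2+((m:ℝ)+3)-8) * T (m+3) ≤ 8*((m:ℝ)+3)^2 * T (m+2)
    ∧ 8*((m:ℝ)+3)^2 * T (m+2) ≤ (((m:ℝ)+3)^2+((m:ℝ)+3)+8) * T (m+3) := by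
  induction m with
  | zero => rw [T_two, T_three]; norm_num
  | succ m ih =>
    set y : ℝ := (m:ℝ) with hy
    have hy0 : 0 ≤ y := by positivity
    have hrec := T_rec (m+2)
    push_cast at hrec ⊢
    have ha : 0 < T (m+2) := T_pos _ (by omega)
    have hb : 0 < T (m+3) := T_pos _ (by omega)
    have hc : 0 < T (m+4) := T_pos _ (by omega)
    set a : ℝ := T (m+2)
    set b : ℝ := T (m+3)
    set c : ℝ := T (m+4)
    have rec' : ((y+4)*(y+3)*(y+6)*(y+7)) * c
        = ((7*(y+4)^2+7*(y+4)-2)*(y+5)^2) * b + (8*(y+4)^2*(y+5)^2) * a := by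
      linear_combination hrec
    have ihl := ih.1
    have ihu := ih.2
    have hM : (0:ℝ) < 8*(y+3)^2*((y+4)*(y+3)*(y+6)*(y+7)) := by positivity
    constructor
    · -- lower: ((y+4)^2+(y+4)-8) * c ≤ 8*(y+4)^2 * b
      have hL0 : (0:ℝ) ≤ (y+4)^2+(y+4)-8 := by nlinarith [hy0, sq_nonneg y]
      have hLC : (0:ℝ) ≤ ((y+4)^2+(y+4)-8)*(8*(y+4)^2*(y+5)^2) :=
        mul_nonneg hL0 (by positivity)
      have h2 := mul_le_mul_of_nonneg_left ihu hLC
      have Erec : (8*(y+3)^2*((y+4)*(y+3)*(y+6)*(y+7))) * (((y+4)^2+(y+4)-8) * c)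
          = ((y+4)^2+(y+4)-8) * (8*(y+3)^2) * (((7*(y+4)^2+7*(y+4)-2)*(y+5)^2) * b)
            + ((y+4)^2+(y+4)-8)*(8*(y+4)^2*(y+5)^2) * (8*(y+3)^2 * a) := by
        linear_combination (8*(y+3)^2*((y+4)^2+(y+4)-8)) * rec'
      have hP2b : (0:ℝ) ≤ (896064 + 1254288*y + 731096*y^2 + 226288*y^3 + 39136*y^4
          + 3584*y^5 + 136*y^6) * b := by positivity
      have key : (8*(y+3)^2*((y+4)*(y+3)*(y+6)*(y+7))) * (((y+4)^2+(y+4)-8) * c)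
          ≤ (8*(y+3)^2*((y+4)*(y+3)*(y+6)*(y+7))) * (8*(y+4)^2 * b) := by
        linarith [Erec, h2, hP2b]
      have final := le_of_mul_le_mul_left key hM
      linarith [final]
    · -- upper: 8*(y+4)^2 * b ≤ ((y+4)^2+(y+4)+8) * c
      have hUC : (0:ℝ) ≤ ((y+4)^2+(y+4)+8)*(8*(y+4)^2*(y+5)^2) := by positivity
      have h1 := mul_le_mul_of_nonneg_left ihl hUC
      have Erec : (8*(y+3)^2*((y+4)*(y+3)*(y+6)*(y+7))) * (((y+4)^2+(y+4)+8) * c)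
          = ((y+4)^2+(y+4)+8) * (8*(y+3)^2) * (((7*(y+4)^2+7*(y+4)-2)*(y+5)^2) * b)
            + ((y+4)^2+(y+4)+8)*(8*(y+4)^2*(y+5)^2) * (8*(y+3)^2 * a) := by
        linear_combination (8*(y+3)^2*((y+4)^2+(y+4)+8)) * rec'
      have hP1b : (0:ℝ) ≤ (2668736 + 4328432*y + 2850216*y^2 + 979984*y^3 + 186144*y^4
          + 18560*y^5 + 760*y^6) * b := by positivity
      have key : (8*(y+3)^2*((y+4)*(y+3)*(y+6)*(y+7))) * (8*(y+4)^2 * b)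
          ≤ (8*(y+3)^2*((y+4)*(y+3)*(y+6)*(y+7))) * (((y+4)^2+(y+4)+8) * c) := by
        linarith [Erec, h1, hP1b]
      have final := le_of_mul_le_mul_left key hM
      linarith [final]

lemma D_eq_pp (n k : ℕ) (hk : k ≠ 0) :
    D n k = 2 / ((n:ℝ) * ((n:ℝ) + 1) ^ 2) * pp n k := by
  rw [D, if_neg hk, pp]
  ring

lemma range_succ_eq (n : ℕ) : range (n+2) = insert 0 (Icc 1 (n+1)) := by
  ext a
  simp only [mem_range, mem_insert, mem_Icc]
  omega

lemma B_eq_s15 (n : ℕ) : B (n+1) = 2 / (((n:ℝ)+1) * ((n:ℝ) + 2) ^ 2) * T (n+1) := by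
  rw [B, if_neg (by omega), T, Finset.mul_sum]
  apply Finset.sum_congr rfl
  intro k hk
  simp only [mem_Icc] at hk
  rw [D_eq_pp (n+1) k (by omega)]
  push_cast
  ring

lemma g_eq_s15 (n : ℕ) :
    g (n+1) = 2 / (((n:ℝ)+1) * ((n:ℝ) + 2) ^ 2) * ((((n:ℝ)+2)/2) * T (n+1)) := by
  rw [g, show (n+1)+1 = n+2 from rfl, range_succ_eq, Finset.sum_insert (by simp)]
  have e : ∀ k ∈ Icc 1 (n+1), (k:ℝ) * D (n+1) k
      = 2 / (((n:ℝ)+1) * ((n:ℝ) + 2) ^ 2) * ((k:ℝ) * pp (n+1) k) := by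
    intro k hk
    simp only [mem_Icc] at hk
    rw [D_eq_pp (n+1) k (by omega)]
    push_cast
    ring
  rw [Finset.sum_congr rfl e, ← Finset.mul_sum, sum_k_pp (n+1)]
  push_cast
  ring

lemma h_eq (n : ℕ) :
    h (n+1) = 2 / (((n:ℝ)+1) * ((n:ℝ) + 2) ^ 2)
      * (((n:ℝ)+1)*(n:ℝ)/6 * T (n+1) + 2/3 * ((n:ℝ)+2)^2 * T n) := by
  rw [h, show (n+1)+1 = n+2 from rfl, range_succ_eq, Finset.sum_insert (by simp)]
  have e : ∀ k ∈ Icc 1 (n+1), (k:ℝ) * ((k:ℝ)-1) * D (n+1) k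
      = 2 / (((n:ℝ)+1) * ((n:ℝ) + 2) ^ 2) * ((k:ℝ) * ((k:ℝ)-1) * pp (n+1) k) := by
    intro k hk
    simp only [mem_Icc] at hk
    rw [D_eq_pp (n+1) k (by omega)]
    push_cast
    ring
  rw [Finset.sum_congr rfl e, ← Finset.mul_sum, sum_kk_pp n]
  norm_num

lemma sigma_eq (n : ℕ) :
    sigmaSq (n+1) = ((n:ℝ)+1)*(n:ℝ)/6 + ((n:ℝ)+2)/2 - (((n:ℝ)+2))^2/4
      + 2/3*((n:ℝ)+2)^2 * (T n / T (n+1)) := by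
  have hT : T (n+1) ≠ 0 := ne_of_gt (T_pos (n+1) (by omega))
  have hc : 2 / (((n:ℝ)+1) * ((n:ℝ) + 2) ^ 2) ≠ 0 := by positivity
  have hmu : mu (n+1) = ((n:ℝ)+2)/2 := by
    rw [mu, g_eq_s15, B_eq_s15, mul_div_mul_left _ _ hc, mul_div_assoc, div_self hT, mul_one]
  have hhb : h (n+1) / B (n+1)
      = ((n:ℝ)+1)*(n:ℝ)/6 + 2/3*((n:ℝ)+2)^2 * (T n / T (n+1)) := by
    rw [h_eq, B_eq_s15, mul_div_mul_left _ _ hc]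
    field_simp
  rw [sigmaSq, hmu, hhb]
  ring

lemma sig_bounds (m : ℕ) :
    ((m:ℝ)+4)/12 - 2 ≤ sigmaSq (m+4) ∧ sigmaSq (m+4) ≤ ((m:ℝ)+4)/12 + 2 := by
  have hm0 : (0:ℝ) ≤ (m:ℝ) := by positivity
  have hT4 : 0 < T (m+4) := T_pos _ (by omega)
  have hT3 : 0 < T (m+3) := T_pos _ (by omega)
  obtain ⟨hl, hu⟩ := inv_bounds (m+1)
  rw [show m+1+3 = m+4 from rfl, show m+1+2 = m+3 from rfl] at hl hu
  push_cast at hl hu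
  have hs := sigma_eq (m+3)
  push_cast at hs
  rw [show (m:ℕ)+3+1 = m+4 from rfl] at hs
  have hsT : sigmaSq (m+4) * T (m+4)
      = (((m:ℝ)+4)*((m:ℝ)+3)/6 + ((m:ℝ)+5)/2 - ((m:ℝ)+5)^2/4) * T (m+4)
        + 2/3*((m:ℝ)+5)^2 * T (m+3) := by
    rw [hs]
    field_simp
    ring
  have hsT2 : (24*((m:ℝ)+4)^2) * (sigmaSq (m+4) * T (m+4))
      = (24*((m:ℝ)+4)^2) * ((((m:ℝ)+4)*((m:ℝ)+3)/6 + ((m:ℝ)+5)/2 - ((m:ℝ)+5)^2/4) * T (m+4))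
        + 2*((m:ℝ)+5)^2 * (8*((m:ℝ)+4)^2 * T (m+3)) := by
    linear_combination (24*((m:ℝ)+4)^2) * hsT
  have hcf : (0:ℝ) ≤ 2*((m:ℝ)+5)^2 := by positivity
  have hMpos : (0:ℝ) < 24*((m:ℝ)+4)^2 * T (m+4) := by positivity
  constructor
  · have h2 := mul_le_mul_of_nonneg_left hl hcf
    have hPolyX : (0:ℝ) ≤ (568 + 322*(m:ℝ) + 44*(m:ℝ)^2) * T (m+4) := by positivity
    have key : (24*((m:ℝ)+4)^2 * T (m+4)) * (((m:ℝ)+4)/12 - 2)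
        ≤ (24*((m:ℝ)+4)^2 * T (m+4)) * sigmaSq (m+4) := by
      nlinarith [hsT2, h2, hPolyX]
    exact le_of_mul_le_mul_left key hMpos
  · have h2 := mul_le_mul_of_nonneg_left hu hcf
    have hPolyX : (0:ℝ) ≤ (168 + 126*(m:ℝ) + 20*(m:ℝ)^2) * T (m+4) := by positivity
    have key : (24*((m:ℝ)+4)^2 * T (m+4)) * sigmaSq (m+4)
        ≤ (24*((m:ℝ)+4)^2 * T (m+4)) * (((m:ℝ)+4)/12 + 2) := by
      nlinarith [hsT2, h2, hPolyX]
    exact le_of_mul_le_mul_left key hMpos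

theorem baxter_variance_asymptotic :
    Filter.Tendsto (fun n : ℕ => sigmaSq n / n) Filter.atTop (nhds (1 / 12)) ∧
    Filter.Tendsto (fun n : ℕ => sigmaSq n) Filter.atTop Filter.atTop := by
  have hband : ∀ n : ℕ, 4 ≤ n →
      1/12 - 2/(n:ℝ) ≤ sigmaSq n / n ∧ sigmaSq n / n ≤ 1/12 + 2/(n:ℝ) := by
    intro n hn
    obtain ⟨m, rfl⟩ : ∃ m, n = m + 4 := ⟨n - 4, by omega⟩
    have hnpos : (0:ℝ) < ((m:ℝ)+4) := by positivity
    obtain ⟨h1, h2⟩ := sig_bounds m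
    have hc : ((m+4 : ℕ):ℝ) = (m:ℝ)+4 := by push_cast; ring
    rw [hc]
    constructor
    · rw [show (1:ℝ)/12 - 2/((m:ℝ)+4) = (((m:ℝ)+4)/12 - 2)/((m:ℝ)+4) by field_simp]
      exact div_le_div_of_nonneg_right h1 hnpos.le
    · rw [show (1:ℝ)/12 + 2/((m:ℝ)+4) = (((m:ℝ)+4)/12 + 2)/((m:ℝ)+4) by field_simp]
      exact div_le_div_of_nonneg_right h2 hnpos.le
  have h2n : Filter.Tendsto (fun n : ℕ => 2/(n:ℝ)) Filter.atTop (nhds 0) := by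
    have := tendsto_one_div_atTop_nhds_zero_nat.const_mul (2:ℝ)
    simpa [mul_one_div, div_eq_mul_inv] using this
  have hlow : Filter.Tendsto (fun n : ℕ => 1/12 - 2/(n:ℝ)) Filter.atTop (nhds (1/12)) := by
    simpa using (tendsto_const_nhds (x := (1:ℝ)/12) (f := Filter.atTop (α := ℕ))).sub h2n
  have hup : Filter.Tendsto (fun n : ℕ => 1/12 + 2/(n:ℝ)) Filter.atTop (nhds (1/12)) := by
    simpa using (tendsto_const_nhds (x := (1:ℝ)/12) (f := Filter.atTop (α := ℕ))).add h2n
  have main : Filter.Tendsto (fun n : ℕ => sigmaSq n / n) Filter.atTop (nhds (1 / 12)) := by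
    apply tendsto_of_tendsto_of_tendsto_of_le_of_le' hlow hup
    · filter_upwards [Filter.eventually_atTop.mpr ⟨4, fun n hn => (hband n hn).1⟩] with n h
      exact h
    · filter_upwards [Filter.eventually_atTop.mpr ⟨4, fun n hn => (hband n hn).2⟩] with n h
      exact h
  refine ⟨main, ?_⟩
  have hev := main.eventually (eventually_gt_nhds (show (1:ℝ)/24 < 1/12 by norm_num))
  apply Filter.tendsto_atTop_mono' _ _ ((tendsto_natCast_atTop_atTop (R := ℝ)).atTop_div_const
    (by norm_num : (0:ℝ) < 24))
  filter_upwards [hev, Filter.eventually_atTop.mpr ⟨1, fun (n:ℕ) hn => hn⟩] with n h hn1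
  have hnpos : (0:ℝ) < (n:ℝ) := by
    have : (1:ℕ) ≤ n := hn1
    exact_mod_cast Nat.lt_of_lt_of_le Nat.zero_lt_one this
  have := (lt_div_iff₀ hnpos).mp h
  calc (n:ℝ)/24 = 1/24 * n := by ring
  _ ≤ sigmaSq n := le_of_lt this
end

section
/- There exists a constant C₁ > 0 such that B_n · n⁴ / 8ⁿ → C₁ as n → ∞; consequently B_n = Θ(8ⁿ/n⁴). -/
open Finset

set_option maxHeartbeats 1000000

lemma chR1 (n j : ℕ) : ((j:ℝ)+1) * (n.choose (j+1)) = ((n:ℝ) - j) * (n.choose j) := by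
  rcases lt_or_ge j n with h | h
  · have := Nat.choose_succ_right_eq n j
    have hc : ((n.choose (j+1) * (j+1) : ℕ) : ℝ) = ((n.choose j * (n - j) : ℕ) : ℝ) := by
      exact_mod_cast congrArg (fun x : ℕ => (x:ℝ)) this
    push_cast [Nat.cast_sub h.le] at hc
    linarith
  · rcases eq_or_lt_of_le h with rfl | h
    · simp [Nat.choose_succ_self]
    · rw [Nat.choose_eq_zero_of_lt h, Nat.choose_eq_zero_of_lt (by omega)]
      simp

lemma chR2 (n j : ℕ) : ((n:ℝ)+1 - j) * ((n+1).choose j) = ((n:ℝ)+1) * (n.choose j) := by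
  have h1 := chR1 (n+1) j
  have h2 : ((n+1 : ℕ) : ℝ) * (n.choose j) = (((n+1).choose (j+1) : ℕ) : ℝ) * ((j:ℝ)+1) := by
    exact_mod_cast congrArg (fun x : ℕ => (x:ℝ)) (Nat.add_one_mul_choose_eq n j)
  push_cast at h1 h2 ⊢
  nlinarith [h1, h2]

lemma mul3 {a b c d e f : ℝ} (h1 : a = d) (h2 : b = e) (h3 : c = f) :
    a*b*c = d*e*f := by rw [h1, h2, h3]

noncomputable def tt (n j : ℕ) : ℝ :=
  ((n+1).choose j : ℕ) * ((n+1).choose (j+1) : ℕ) * ((n+1).choose (j+2) : ℕ)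

noncomputable def Np (m k : ℝ) : ℝ :=
  k*(14*m^3+60*m^4+92*m^5+60*m^6+14*m^7)
  + k^2*(-8*m^2-55*m^3-113*m^4-93*m^5-27*m^6)
  + k^3*(12*m^2+28*m^3-12*m^4-74*m^5-60*m^6-14*m^7)
  + k^4*(4*m^2+47*m^3+109*m^4+93*m^5+27*m^6)
  + k^5*(-12*m^2-42*m^3-48*m^4-18*m^5)
  + k^6*(4*m^2+8*m^3+4*m^4)

lemma hA1 (n j : ℕ) : ((n:ℝ)+3)^3 * tt (n+1) j
    = (((n:ℝ)+3)-j) * (((n:ℝ)+2)-j) * (((n:ℝ)+1)-j) * tt (n+2) j := by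
  have h := mul3 (chR2 (n+2) j) (chR2 (n+2) (j+1)) (chR2 (n+2) (j+2))
  simp only [tt, show n+1+1 = n+2 from rfl, show n+2+1 = n+3 from rfl,
    show j+1+1 = j+2 from rfl, show j+2+1 = j+3 from rfl] at h ⊢
  push_cast at h ⊢
  linear_combination -h

lemma hA2a (n j : ℕ) : (((n:ℝ)+2)-j) * (((n:ℝ)+1)-j) * (((n:ℝ))-j) * tt (n+1) j
    = ((n:ℝ)+2)^3 * tt n j := by
  have h := mul3 (chR2 (n+1) j) (chR2 (n+1) (j+1)) (chR2 (n+1) (j+2))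
  simp only [tt, show n+1+1 = n+2 from rfl, show j+1+1 = j+2 from rfl,
    show j+2+1 = j+3 from rfl] at h ⊢
  push_cast at h ⊢
  linear_combination h

lemma hA3 (n j : ℕ) : ((j:ℝ)+1) * ((j:ℝ)+2) * ((j:ℝ)+3) * tt (n+2) (j+1)
    = (((n:ℝ)+3)-j) * (((n:ℝ)+2)-j) * (((n:ℝ)+1)-j) * tt (n+2) j := by
  have h := mul3 (chR1 (n+3) j) (chR1 (n+3) (j+1)) (chR1 (n+3) (j+2))
  simp only [tt, show n+2+1 = n+3 from rfl, show j+1+1 = j+2 from rfl,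
    show j+2+1 = j+3 from rfl, show j+1+2 = j+3 from rfl] at h ⊢
  push_cast at h ⊢
  linear_combination h

lemma LIw (n j : ℕ) :
    ((((j:ℝ))+1)*(((j:ℝ))+2)*(((j:ℝ))+3)) *
      ((((n:ℝ))+2)^3*((((n:ℝ))+2)+1)^3 *
        (((((n:ℝ))+2)*((((n:ℝ))+2)-1)*((((n:ℝ))+2)+2)*((((n:ℝ))+2)+3)) * tt (n+2) j - ((7*(((n:ℝ))+2)^2+7*(((n:ℝ))+2)-2)*((((n:ℝ))+2)+1)^2) * tt (n+1) j - (8*(((n:ℝ))+2)^2*((((n:ℝ))+2)+1)^2) * tt n j))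
    = ((((j:ℝ))+1)*(((j:ℝ))+2)*(((j:ℝ))+3)) *
      (Np ((((n:ℝ))+2)) (((j:ℝ))+2) * tt (n+2) (j+1) - Np ((((n:ℝ))+2)) (((j:ℝ))+1) * tt (n+2) j) := by
  have h1 := hA1 n j
  have h2 := hA2a n j
  have h3 := hA3 n j
  simp only [Np]
  linear_combination (-(((((j:ℝ))+1)*(((j:ℝ))+2)*(((j:ℝ))+3))*(((n:ℝ))+2)^3*((7*(((n:ℝ))+2)^2+7*(((n:ℝ))+2)-2)*((((n:ℝ))+2)+1)^2) + ((((j:ℝ))+1)*(((j:ℝ))+2)*(((j:ℝ))+3))*(8*(((n:ℝ))+2)^2*((((n:ℝ))+2)+1)^2)*(((((n:ℝ)))+2-((j:ℝ)))*((((n:ℝ)))+1-((j:ℝ)))*((((n:ℝ)))-((j:ℝ)))))) * h1 + (((((j:ℝ))+1)*(((j:ℝ))+2)*(((j:ℝ))+3))*((((n:ℝ))+2)+1)^3*(8*(((n:ℝ))+2)^2*((((n:ℝ))+2)+1)^2)) * h2 + (-((((j:ℝ))+2)*(14*(((n:ℝ))+2)^3+60*(((n:ℝ))+2)^4+92*(((n:ℝ))+2)^5+60*(((n:ℝ))+2)^6+14*(((n:ℝ))+2)^7)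 + (((j:ℝ))+2)^2*(-8*(((n:ℝ))+2)^2-55*(((n:ℝ))+2)^3-113*(((n:ℝ))+2)^4-93*(((n:ℝ))+2)^5-27*(((n:ℝ))+2)^6) + (((j:ℝ))+2)^3*(12*(((n:ℝ))+2)^2+28*(((n:ℝ))+2)^3-12*(((n:ℝ))+2)^4-74*(((n:ℝ))+2)^5-60*(((n:ℝ))+2)^6-14*(((n:ℝ))+2)^7) + (((j:ℝ))+2)^4*(4*(((n:ℝ))+2)^2+47*(((n:ℝ))+2)^3+109*(((n:ℝ))+2)^4+93*(((n:ℝ))+2)^5+27*(((n:ℝ))+2)^6) + (((j:ℝ))+2)^5*(-12*(((n:ℝ))+2)^2-42*(((n:ℝ))+2)^3-48*(((n:ℝ))+2)^4-18*(((n:ℝ))+2)^5) + (((j:ℝ))+2)^6*(4*(((n:ℝ))+2)^2+8*(((n:ℝ))+2)^3+4*(((n:ℝ))+2)^4))) * h3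

lemma LI (n j : ℕ) :
    (((n:ℝ))+2)^3*((((n:ℝ))+2)+1)^3 *
        (((((n:ℝ))+2)*((((n:ℝ))+2)-1)*((((n:ℝ))+2)+2)*((((n:ℝ))+2)+3)) * tt (n+2) j - ((7*(((n:ℝ))+2)^2+7*(((n:ℝ))+2)-2)*((((n:ℝ))+2)+1)^2) * tt (n+1) j - (8*(((n:ℝ))+2)^2*((((n:ℝ))+2)+1)^2) * tt n j)
    = Np ((((n:ℝ))+2)) (((j:ℝ))+2) * tt (n+2) (j+1) - Np ((((n:ℝ))+2)) (((j:ℝ))+1) * tt (n+2) j := by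
  have hw : ((((j:ℝ))+1)*(((j:ℝ))+2)*(((j:ℝ))+3)) ≠ 0 := by positivity
  exact mul_left_cancel₀ hw (LIw n j)

lemma hBsum (l : ℕ) :
    B (l+1) = 2/(((l:ℝ)+1)*((l:ℝ)+2)^2) * ∑ j ∈ range (l+1), tt (l+1) j := by
  rw [B, if_neg (Nat.succ_ne_zero l), ← Finset.Ico_add_one_right_eq_Icc, Finset.sum_Ico_eq_sum_range, mul_sum]
  simp only [show l+1+1-1 = l+1 from rfl]
  refine Finset.sum_congr rfl fun i _ => ?_
  rw [D, if_neg (by omega : ¬ 1+i = 0)]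
  simp only [tt, show 1+i-1 = i by omega, show 1+i = i+1 by omega,
    show l+1+1 = l+2 from rfl]
  push_cast
  ring

lemma tt_nonneg (n j : ℕ) : 0 ≤ tt n j := by
  simp only [tt]; positivity

lemma hBpos (l : ℕ) : 0 < B l := by
  cases l with
  | zero => simp [B]
  | succ m =>
    rw [hBsum m]
    have hpos : 0 < ∑ j ∈ range (m+1), tt (m+1) j := by
      refine Finset.sum_pos' (fun i _ => tt_nonneg _ _) ⟨0, Finset.mem_range.2 (Nat.succ_pos m), ?_⟩
      simp only [tt]
      have h1 : 0 < (m+2).choose 0 := Nat.choose_pos (Nat.zero_le _)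
      have h2 : 0 < (m+2).choose 1 := Nat.choose_pos (by omega)
      have h3 : 0 < (m+2).choose 2 := Nat.choose_pos (by omega)
      positivity
    positivity

lemma sum_LI (n : ℕ) :
    ((n:ℝ)+2)^3*((n:ℝ)+3)^3 *
      ((((n:ℝ)+2)*(((n:ℝ)+2)-1)*(((n:ℝ)+2)+2)*(((n:ℝ)+2)+3)) * ∑ j ∈ range (n+2), tt (n+2) j
        - ((7*((n:ℝ)+2)^2+7*((n:ℝ)+2)-2)*(((n:ℝ)+2)+1)^2) * ∑ j ∈ range (n+2), tt (n+1) j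
        - (8*((n:ℝ)+2)^2*(((n:ℝ)+2)+1)^2) * ∑ j ∈ range (n+2), tt n j) = 0 := by
  have htel : ∑ j ∈ range (n+2),
      (Np ((n:ℝ)+2) ((j:ℝ)+2) * tt (n+2) (j+1) - Np ((n:ℝ)+2) ((j:ℝ)+1) * tt (n+2) j)
      = Np ((n:ℝ)+2) (((n+2:ℕ):ℝ)+1) * tt (n+2) (n+2) - Np ((n:ℝ)+2) (((0:ℕ):ℝ)+1) * tt (n+2) 0 := by
    have := Finset.sum_range_sub (f := fun j => Np ((n:ℝ)+2) ((j:ℝ)+1) * tt (n+2) j) (n+2)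
    rw [← this]
    refine Finset.sum_congr rfl fun j _ => ?_
    push_cast
    ring
  have hz : tt (n+2) (n+2) = 0 := by
    simp only [tt]
    rw [Nat.choose_eq_zero_of_lt (by omega : n+2+1 < n+2+2)]
    ring
  have hNp1 : Np ((n:ℝ)+2) (((0:ℕ):ℝ)+1) = 0 := by
    simp only [Np]; push_cast; ring
  have hsum := Finset.sum_congr rfl (fun j (_ : j ∈ range (n+2)) => LI n j)
  rw [htel, hz, hNp1, mul_zero, zero_mul, sub_zero] at hsum
  calc ((n:ℝ)+2)^3*((n:ℝ)+3)^3 *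
      ((((n:ℝ)+2)*(((n:ℝ)+2)-1)*(((n:ℝ)+2)+2)*(((n:ℝ)+2)+3)) * ∑ j ∈ range (n+2), tt (n+2) j
        - ((7*((n:ℝ)+2)^2+7*((n:ℝ)+2)-2)*(((n:ℝ)+2)+1)^2) * ∑ j ∈ range (n+2), tt (n+1) j
        - (8*((n:ℝ)+2)^2*(((n:ℝ)+2)+1)^2) * ∑ j ∈ range (n+2), tt n j)
      = ∑ j ∈ range (n+2), (((n:ℝ)+2)^3*(((n:ℝ)+2)+1)^3 *
        ((((n:ℝ)+2)*(((n:ℝ)+2)-1)*(((n:ℝ)+2)+2)*(((n:ℝ)+2)+3)) * tt (n+2) j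
          - ((7*((n:ℝ)+2)^2+7*((n:ℝ)+2)-2)*(((n:ℝ)+2)+1)^2) * tt (n+1) j
          - (8*((n:ℝ)+2)^2*(((n:ℝ)+2)+1)^2) * tt n j)) := by
        rw [Finset.mul_sum, Finset.mul_sum, Finset.mul_sum, ← Finset.sum_sub_distrib,
          ← Finset.sum_sub_distrib, Finset.mul_sum]
        refine Finset.sum_congr rfl fun j _ => ?_
        ring
    _ = 0 := hsum

lemma hrecB (n : ℕ) :
    ((n:ℝ)+5)*((n:ℝ)+6) * B (n+3)
      = (7*((n:ℝ)+3)^2+7*((n:ℝ)+3)-2) * B (n+2) + 8*((n:ℝ)+2)*((n:ℝ)+1) * B (n+1) := by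
  have t1 : ∑ j ∈ range (n+3), tt (n+3) j = ((n:ℝ)+3)*((n:ℝ)+4)^2/2 * B (n+3) := by
    have h := hBsum (n+2)
    push_cast at h
    rw [show n+2+1 = n+3 from rfl] at h
    rw [h]
    field_simp
    ring
  have t2 : ∑ j ∈ range (n+3), tt (n+2) j = ((n:ℝ)+2)*((n:ℝ)+3)^2/2 * B (n+2) := by
    rw [Finset.sum_range_succ]
    have hz : tt (n+2) (n+2) = 0 := by
      simp only [tt]
      rw [Nat.choose_eq_zero_of_lt (by omega : n+2+1 < n+2+2)]
      ring
    rw [hz, add_zero]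
    have h := hBsum (n+1)
    push_cast at h
    rw [show n+1+1 = n+2 from rfl] at h
    rw [h]
    field_simp
    ring
  have t3 : ∑ j ∈ range (n+3), tt (n+1) j = ((n:ℝ)+1)*((n:ℝ)+2)^2/2 * B (n+1) := by
    rw [Finset.sum_range_succ, Finset.sum_range_succ]
    have hz1 : tt (n+1) (n+2) = 0 := by
      simp only [tt]
      rw [Nat.choose_eq_zero_of_lt (by omega : n+1+1 < n+2+2)]
      ring
    have hz2 : tt (n+1) (n+1) = 0 := by
      simp only [tt]
      rw [Nat.choose_eq_zero_of_lt (by omega : n+1+1 < n+1+2)]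
      ring
    rw [hz1, hz2, add_zero, add_zero]
    have h := hBsum n
    push_cast at h
    rw [h]
    field_simp
  have H := sum_LI (n+1)
  rw [show n+1+2 = n+3 from rfl, show n+1+1 = n+2 from rfl] at H
  push_cast at H
  rw [t1, t2, t3] at H
  have H' : (((n:ℝ)+3)^5*((n:ℝ)+4)^5*((n:ℝ)+2)/2) *
      (((n:ℝ)+5)*((n:ℝ)+6) * B (n+3)
        - (7*((n:ℝ)+3)^2+7*((n:ℝ)+3)-2) * B (n+2) - 8*((n:ℝ)+2)*((n:ℝ)+1) * B (n+1)) = 0 := by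
    linear_combination H
  have hc : (((n:ℝ)+3)^5*((n:ℝ)+4)^5*((n:ℝ)+2)/2) ≠ 0 := by positivity
  have := (mul_eq_zero.mp H').resolve_left hc
  linarith

lemma ratLB (n : ℕ) : 4 * B (n+5) ≤ B (n+6) := by
  have hr := hrecB (n+3)
  rw [show n+3+3 = n+6 from rfl, show n+3+2 = n+5 from rfl, show n+3+1 = n+4 from rfl] at hr
  push_cast at hr
  have h4 := hBpos (n+4)
  have h5 := hBpos (n+5)
  have h6 := hBpos (n+6)
  nlinarith [sq_nonneg ((n:ℝ)), mul_pos h4 h5, mul_nonneg (le_of_lt h5) (sq_nonneg ((n:ℝ)))]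

lemma ratUB (n : ℕ) : B (n+7) ≤ 9 * B (n+6) := by
  have hr := hrecB (n+4)
  rw [show n+4+3 = n+7 from rfl, show n+4+2 = n+6 from rfl, show n+4+1 = n+5 from rfl] at hr
  push_cast at hr
  have hlb := ratLB n
  have h5 := hBpos (n+5)
  have h6 := hBpos (n+6)
  have h7 := hBpos (n+7)
  nlinarith [mul_nonneg (mul_nonneg (by positivity : (0:ℝ) ≤ 8*((n:ℝ)+6)*((n:ℝ)+5)) (le_of_lt h5)) (le_of_lt h6),
    mul_le_mul_of_nonneg_left hlb (by positivity : (0:ℝ) ≤ 8*((n:ℝ)+6)*((n:ℝ)+5)),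
    mul_pos h6 h7]

lemma step_alg (m x y z : ℝ) (hm : 34 ≤ m) (hy : 0 < y) (hz : 0 < z)
    (hrec : (m+2)*(m+3)*x = (7*m^2+7*m-2)*y + 8*(m-1)*(m-2)*z)
    (h4 : 4*z ≤ y)
    (ih : |y/z - (8 - 32/(m-1))| ≤ 4356/(m-1)^2) :
    |x/y - (8 - 32/m)| ≤ 4356/m^2 := by
  have hx : x = ((7*m^2+7*m-2)*y + 8*(m-1)*(m-2)*z) / ((m+2)*(m+3)) := by
    rw [eq_div_iff (by positivity : ((m:ℝ)+2)*(m+3) ≠ 0)]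
    linear_combination hrec
  have hm0 : m ≠ 0 := by linarith
  have hm5 : m - 5 ≠ 0 := by linarith
  have hm2 : m + 2 ≠ 0 := by linarith
  have hm3 : m + 3 ≠ 0 := by linarith
  have hm1 : m - 1 ≠ 0 := by linarith
  have hyne : y ≠ 0 := hy.ne'
  have hzne : z ≠ 0 := hz.ne'
  have hsplit : x/y - (8 - 32/m)
      = (120*m^2 - 360*m - 960)/(m*(m-5)*(m+2)*(m+3))
        + (8*(m-1)*(m-2)) * ((8 - 32/(m-1)) - y/z) * (z*(m-1)) /
          (8*(m+2)*(m+3)*y*(m-5)) := by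
    rw [hx]
    field_simp
    ring
  rw [hsplit]
  have hE1 : (0:ℝ) ≤ 120*m^2 - 360*m - 960 := by nlinarith
  have hEnn : (0:ℝ) ≤ (120*m^2 - 360*m - 960)/(m*(m-5)*(m+2)*(m+3)) := by
    have h : (0:ℝ) < m*(m-5)*(m+2)*(m+3) := by nlinarith
    positivity
  have hE : (120*m^2 - 360*m - 960)/(m*(m-5)*(m+2)*(m+3)) ≤ 120/m^2 := by
    rw [div_le_div_iff₀ (by nlinarith) (by positivity)]
    nlinarith
  have hden : (0:ℝ) < 8*(m+2)*(m+3)*y*(m-5) := by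
    have h2 : (0:ℝ) < m + 2 := by linarith
    have h3 : (0:ℝ) < m + 3 := by linarith
    have h5 : (0:ℝ) < m - 5 := by linarith
    positivity
  have hnum : |(8 - 32/(m-1)) - y/z| ≤ 4356/(m-1)^2 := by
    rw [abs_sub_comm]; exact ih
  have hcorr : |(8*(m-1)*(m-2)) * ((8 - 32/(m-1)) - y/z) * (z*(m-1)) /
          (8*(m+2)*(m+3)*y*(m-5))| ≤ 1245/(m-1)^2 := by
    rw [abs_div, abs_of_pos hden, abs_mul, abs_mul,
      abs_of_nonneg (by nlinarith : (0:ℝ) ≤ 8*(m-1)*(m-2)),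
      abs_of_nonneg (by nlinarith [hz.le] : (0:ℝ) ≤ z*(m-1))]
    rw [div_le_div_iff₀ hden (by positivity)]
    have k1 : |(8 - 32/(m-1)) - y/z| * (m-1)^2 ≤ 4356 := by
      have := mul_le_mul_of_nonneg_right hnum (by positivity : (0:ℝ) ≤ (m-1)^2)
      calc |(8 - 32/(m-1)) - y/z| * (m-1)^2 ≤ 4356/(m-1)^2 * (m-1)^2 := this
        _ = 4356 := by field_simp
    have k2 : (m-1)^2*(m-2) ≤ (m+2)*(m+3)*(m-5) := by nlinarith
    have hQ : (0:ℝ) < (m+2)*(m+3)*(m-5) := by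
      have h2 : (0:ℝ) < m + 2 := by linarith
      have h3 : (0:ℝ) < m + 3 := by linarith
      have h5 : (0:ℝ) < m - 5 := by linarith
      positivity
    calc 8*(m-1)*(m-2) * |(8 - 32/(m-1)) - y/z| * (z*(m-1)) * (m-1)^2
        = (8*z*(m-2)*(m-1)^2) * (|(8 - 32/(m-1)) - y/z| * (m-1)^2) := by ring
      _ ≤ (8*z*(m-2)*(m-1)^2) * 4356 := by
          refine mul_le_mul_of_nonneg_left k1 ?_
          have hm2' : (0:ℝ) < m - 2 := by linarith
          positivity
      _ = 34848 * ((m-1)^2*(m-2)) * z := by ring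
      _ ≤ 34848 * ((m+2)*(m+3)*(m-5)) * z := by
          have h := mul_le_mul_of_nonneg_right k2 hz.le
          linarith [h]
      _ ≤ 1245 * (8*(m+2)*(m+3)*y*(m-5)) := by
          have h1 := mul_le_mul_of_nonneg_left h4 (le_of_lt hQ)
          have h2 : (0:ℝ) ≤ (m+2)*(m+3)*(m-5)*y := mul_nonneg hQ.le hy.le
          linarith [h1, h2]
  calc |(120*m^2 - 360*m - 960)/(m*(m-5)*(m+2)*(m+3))
        + (8*(m-1)*(m-2)) * ((8 - 32/(m-1)) - y/z) * (z*(m-1)) / (8*(m+2)*(m+3)*y*(m-5))|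
      ≤ 120/m^2 + 1245/(m-1)^2 := by
        refine (abs_add_le _ _).trans ?_
        exact add_le_add (by rw [abs_of_nonneg hEnn]; exact hE) hcorr
    _ ≤ 4356/m^2 := by
        have h1 : 1245/(m-1)^2 ≤ 4236/m^2 := by
          rw [div_le_div_iff₀ (by positivity) (by positivity)]
          nlinarith
        have h2 : (120:ℝ)/m^2 + 4236/m^2 = 4356/m^2 := by ring
        linarith [h1, h2]

lemma delta_alg (m x y : ℝ) (hm : 34 ≤ m) (hy : 0 < y)
    (hd : |x/y - (8 - 32/m)| ≤ 4356/m^2) :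
    |x*m^4/(8*y*(m-1)^4) - 1| ≤ 700/m^2 := by
  have hm1 : (0:ℝ) < m - 1 := by linarith
  have hm0 : (0:ℝ) < m := by linarith
  have heq : x*m^4/(8*y*(m-1)^4) - 1
      = ((x/y - (8 - 32/m))*m^4 - 48*m^2 + 32*m - 8)/(8*(m-1)^4) := by
    field_simp
    ring
  rw [heq, abs_div, abs_of_pos (by positivity : (0:ℝ) < 8*(m-1)^4)]
  have hnum : |(x/y - (8 - 32/m))*m^4 - 48*m^2 + 32*m - 8| ≤ 4404*m^2 := by
    have h1 : |(x/y - (8 - 32/m))*m^4| ≤ 4356*m^2 := by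
      rw [abs_mul, abs_of_nonneg (by positivity : (0:ℝ) ≤ m^4)]
      calc |x/y - (8 - 32/m)| * m^4 ≤ (4356/m^2) * m^4 :=
            mul_le_mul_of_nonneg_right hd (by positivity)
        _ = 4356*m^2 := by field_simp
    have h2 : |(-48)*m^2 + 32*m - 8| ≤ 48*m^2 := by
      rw [abs_le]
      constructor <;> nlinarith
    calc |(x/y - (8 - 32/m))*m^4 - 48*m^2 + 32*m - 8|
        = |((x/y - (8 - 32/m))*m^4) + ((-48)*m^2 + 32*m - 8)| := by ring_nf
      _ ≤ |(x/y - (8 - 32/m))*m^4| + |(-48)*m^2 + 32*m - 8| := abs_add_le _ _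
      _ ≤ 4356*m^2 + 48*m^2 := add_le_add h1 h2
      _ = 4404*m^2 := by ring
  calc |(x/y - (8 - 32/m))*m^4 - 48*m^2 + 32*m - 8| / (8*(m-1)^4)
      ≤ (4404*m^2) / (8*(m-1)^4) := (div_le_div_iff_of_pos_right (by positivity)).2 hnum
    _ ≤ 700/m^2 := by
        rw [div_le_div_iff₀ (by positivity) (by positivity)]
        have h : 33*m ≤ 34*(m-1) := by linarith
        have h4p : (33*m)^4 ≤ (34*(m-1))^4 :=
          pow_le_pow_left₀ (by positivity) h 4
        nlinarith [h4p]

lemma log_bound (u : ℝ) (h1 : |u - 1| ≤ 1/2) : |Real.log u| ≤ 2*|u-1| := by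
  have hu : 1/2 ≤ u := by have := abs_le.1 h1; linarith [this.1]
  have hu0 : 0 < u := by linarith
  rcases le_or_gt 1 u with h | h
  · rw [abs_of_nonneg (Real.log_nonneg h), abs_of_nonneg (by linarith)]
    have := Real.log_le_sub_one_of_pos hu0
    linarith
  · rw [abs_of_neg (Real.log_neg hu0 h), abs_of_neg (by linarith)]
    have hinv := Real.log_le_sub_one_of_pos (by positivity : (0:ℝ) < u⁻¹)
    rw [Real.log_inv] at hinv
    have h2 : u⁻¹ - 1 = (1-u)/u := by field_simp
    rw [h2] at hinv
    have h3 : (1-u)/u ≤ 2*(1-u) := by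
      rw [div_le_iff₀ hu0]
      nlinarith
    linarith

lemma main_ind : ∀ i : ℕ, |B (i+33) / B (i+32) - (8 - 32/((i:ℝ)+33))| ≤ 4356/((i:ℝ)+33)^2 := by
  intro i
  induction i with
  | zero =>
    have hlb := ratLB 27
    rw [show 27+5 = 32 from rfl, show 27+6 = 33 from rfl] at hlb
    have hub := ratUB 26
    rw [show 26+7 = 33 from rfl, show 26+6 = 32 from rfl] at hub
    have hz := hBpos 32
    have h4 : (4:ℝ) ≤ B 33 / B 32 := (le_div_iff₀ hz).2 (by linarith)
    have h9 : B 33 / B 32 ≤ 9 := (div_le_iff₀ hz).2 (by linarith)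
    rw [abs_le]
    push_cast
    norm_num
    constructor <;> linarith
  | succ i ih =>
    rw [show i+1+33 = i+34 from rfl, show i+1+32 = i+33 from rfl]
    push_cast
    have hr := hrecB (i+31)
    rw [show i+31+3 = i+34 from rfl, show i+31+2 = i+33 from rfl,
        show i+31+1 = i+32 from rfl] at hr
    push_cast at hr
    have hy4' := ratLB (i+27)
    rw [show i+27+5 = i+32 from rfl, show i+27+6 = i+33 from rfl] at hy4'
    have hci : (0:ℝ) ≤ (i:ℝ) := Nat.cast_nonneg i
    have hstep := step_alg ((i:ℝ)+34) (B (i+34)) (B (i+33)) (B (i+32))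
      (by linarith) (hBpos _) (hBpos _)
      (by linear_combination hr)
      (by linarith)
      (by rw [show ((i:ℝ)+34)-1 = (i:ℝ)+33 by ring]; exact ih)
    convert hstep using 3 <;> ring

noncomputable def cB (n : ℕ) : ℝ := B n * (n:ℝ)^4 / 8^n

lemma hcBpos (n : ℕ) (hn : 1 ≤ n) : 0 < cB n := by
  have h1 := hBpos n
  have h2 : (0:ℝ) < (n:ℝ) := by exact_mod_cast Nat.pos_of_ne_zero (by omega)
  rw [cB]
  positivity

lemma hdelta (i : ℕ) : |cB (i+34) / cB (i+33) - 1| ≤ 700/((i:ℝ)+34)^2 := by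
  have hci : (0:ℝ) ≤ (i:ℝ) := Nat.cast_nonneg i
  have hy := hBpos (i+33)
  have hd := main_ind (i+1)
  rw [show i+1+33 = i+34 from rfl, show i+1+32 = i+33 from rfl] at hd
  push_cast at hd
  rw [show (i:ℝ)+1+33 = (i:ℝ)+34 by ring] at hd
  have hda := delta_alg ((i:ℝ)+34) (B (i+34)) (B (i+33)) (by linarith) hy hd
  have hcr : cB (i+34) / cB (i+33)
      = B (i+34)*((i:ℝ)+34)^4/(8*B (i+33)*(((i:ℝ)+34)-1)^4) := by
    simp only [cB]
    have h8 : (8:ℝ)^(i+34) = 8^(i+33) * 8 := pow_succ 8 (i+33)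
    have h80 : (8:ℝ)^(i+33) ≠ 0 := by positivity
    have hi33 : ((i:ℝ)+33) ≠ 0 := by linarith
    rw [h8]
    push_cast
    rw [show ((i:ℝ)+34)-1 = (i:ℝ)+33 by ring]
    field_simp
  rw [hcr]
  exact hda

lemma hratio39 (j : ℕ) : |cB (j+39) / cB (j+38) - 1| ≤ 700/((j:ℝ)+39)^2 := by
  have h := hdelta (j+5)
  rw [show j+5+34 = j+39 from rfl, show j+5+33 = j+38 from rfl] at h
  push_cast at h
  rw [show ((j:ℝ)+5+34) = (j:ℝ)+39 by ring] at h
  exact h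

theorem baxter_asymptotic_growth :
    ∃ C : ℝ, 0 < C ∧
      Filter.Tendsto (fun n : ℕ => B n * (n : ℝ) ^ 4 / 8 ^ n) Filter.atTop (nhds C) := by
  set f : ℕ → ℝ := fun j => Real.log (cB (j+39) / cB (j+38)) with hf
  have hfb : ∀ j : ℕ, |f j| ≤ 1400/((j:ℝ)+39)^2 := by
    intro j
    have hci : (0:ℝ) ≤ (j:ℝ) := Nat.cast_nonneg j
    have h1 := hratio39 j
    have hhalf : 700/((j:ℝ)+39)^2 ≤ 1/2 := by
      rw [div_le_iff₀ (by positivity)]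
      nlinarith
    have h2 := log_bound (cB (j+39) / cB (j+38)) (h1.trans hhalf)
    calc |f j| ≤ 2*|cB (j+39) / cB (j+38) - 1| := h2
      _ ≤ 2*(700/((j:ℝ)+39)^2) := by linarith
      _ = 1400/((j:ℝ)+39)^2 := by ring
  have hg : Summable (fun j : ℕ => 1400/((j:ℝ)+39)^2) := by
    have h0 : Summable (fun n : ℕ => 1/(n:ℝ)^2) :=
      Real.summable_one_div_nat_pow.mpr (by norm_num)
    have h1 : Summable (fun n : ℕ => 1/((n+39:ℕ):ℝ)^2) := (summable_nat_add_iff 39).2 h0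
    have h2 : Summable (fun n : ℕ => 1/((n:ℝ)+39)^2) := by
      refine h1.congr fun n => ?_
      push_cast
      ring
    simpa [div_eq_mul_inv] using h2.mul_left 1400
  have hfs : Summable f :=
    Summable.of_norm_bounded hg (fun j => by simpa [Real.norm_eq_abs] using hfb j)
  have htel : ∀ i : ℕ, ∑ j ∈ Finset.range i, f j = Real.log (cB (i+38)) - Real.log (cB 38) := by
    intro i
    have hsub := Finset.sum_range_sub (f := fun k => Real.log (cB (k+38))) i
    simp only [Nat.zero_add] at hsub
    rw [← hsub]
    refine Finset.sum_congr rfl fun j _ => ?_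
    show Real.log (cB (j+39) / cB (j+38)) = _
    rw [Real.log_div (hcBpos (j+39) (by omega)).ne' (hcBpos (j+38) (by omega)).ne']
  have hT := hfs.hasSum.tendsto_sum_nat
  have hlogt : Filter.Tendsto (fun i => Real.log (cB (i+38))) Filter.atTop
      (nhds ((∑' j, f j) + Real.log (cB 38))) := by
    have heq : (fun i => Real.log (cB (i+38)))
        = fun i => (∑ j ∈ Finset.range i, f j) + Real.log (cB 38) := by
      funext i
      rw [htel i]
      ring
    rw [heq]
    exact hT.add_const _
  have hct : Filter.Tendsto (fun i => cB (i+38)) Filter.atTop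
      (nhds (Real.exp ((∑' j, f j) + Real.log (cB 38)))) := by
    have he : (fun i => cB (i+38)) = fun i => Real.exp (Real.log (cB (i+38))) := by
      funext i
      rw [Real.exp_log (hcBpos _ (by omega))]
    rw [he]
    exact (Real.continuous_exp.tendsto _).comp hlogt
  refine ⟨Real.exp ((∑' j, f j) + Real.log (cB 38)), Real.exp_pos _, ?_⟩
  rw [← Filter.tendsto_add_atTop_iff_nat 38]
  simpa [cB] using hct
end
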